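/- Fix δ = δ(n) with δ → 0 as n → ∞, and let L₀ = (log δ^{-1})/(2δ). Then Σ_{k=1}^{⌊L₀⌋} (1/(√(2π) k^{3/2})) · ((1+δ)^k − 1) → 0 as n → ∞. -/

import Mathlib

open Real Filter

private lemma tele_sum (g : ℕ → ℝ) (a : ℕ) : ∀ N, a ≤ N →
    ∑ k ∈ Finset.Ioc a N, (g (k - 1) - g k) = g a - g N := by
  intro N hN
  induction N, hN using Nat.le_induction with
  | base => simp
  | succ N hN ih =>
    rw [Finset.sum_Ioc_succ_top (by omega), ih]
    have : N + 1 - 1 = N := by omega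
    rw [this]; ring

private lemma sum_le_tele (f g : ℕ → ℝ) (a N : ℕ) (hN : a ≤ N)
    (h : ∀ k ∈ Finset.Ioc a N, f k ≤ g (k - 1) - g k) :
    ∑ k ∈ Finset.Ioc a N, f k ≤ g a - g N :=
  le_of_le_of_eq (Finset.sum_le_sum h) (tele_sum g a N hN)

private lemma inv_sqrt_le (k : ℕ) (hk : 1 ≤ k) :
    1 / Real.sqrt k ≤ 2 * Real.sqrt k - 2 * Real.sqrt ((k - 1 : ℕ) : ℝ) := by
  have hc : ((k - 1 : ℕ) : ℝ) = (k : ℝ) - 1 := by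
    push_cast [Nat.cast_sub hk]; ring
  rw [hc]
  set a := Real.sqrt k with ha
  set b := Real.sqrt ((k : ℝ) - 1) with hb
  have hk1 : (1 : ℝ) ≤ (k : ℝ) := by exact_mod_cast hk
  have ha2 : a ^ 2 = k := Real.sq_sqrt (by linarith)
  have hb2 : b ^ 2 = (k : ℝ) - 1 := Real.sq_sqrt (by linarith)
  have hapos : 0 < a := Real.sqrt_pos.mpr (by linarith)
  have hbnn : 0 ≤ b := Real.sqrt_nonneg _
  rw [div_le_iff₀ hapos]
  nlinarith [sq_nonneg (a - b)]

private lemma inv_pow_le (k : ℕ) (hk : 2 ≤ k) :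
    1 / ((k : ℝ) * Real.sqrt k) ≤ 2 / Real.sqrt ((k - 1 : ℕ) : ℝ) - 2 / Real.sqrt k := by
  have hc : ((k - 1 : ℕ) : ℝ) = (k : ℝ) - 1 := by
    push_cast [Nat.cast_sub (by omega : 1 ≤ k)]; ring
  rw [hc]
  set a := Real.sqrt k with ha
  set b := Real.sqrt ((k : ℝ) - 1) with hb
  have hk1 : (2 : ℝ) ≤ (k : ℝ) := by exact_mod_cast hk
  have ha2 : a ^ 2 = k := Real.sq_sqrt (by linarith)
  have hb2 : b ^ 2 = (k : ℝ) - 1 := Real.sq_sqrt (by linarith)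
  have hapos : 0 < a := Real.sqrt_pos.mpr (by linarith)
  have hbpos : 0 < b := Real.sqrt_pos.mpr (by linarith)
  have hba : b ≤ a := Real.sqrt_le_sqrt (by linarith)
  rw [div_sub_div _ _ (ne_of_gt hbpos) (ne_of_gt hapos), div_le_div_iff₀ (by positivity) (by positivity)]
  -- 1 * (b * a) ≤ (2 * a - 2 * b) * (k * a)
  have hk' : (k : ℝ) = a ^ 2 := ha2.symm
  nlinarith [sq_nonneg (a - b), mul_pos hapos hbpos]

private lemma sum_inv_sqrt (m : ℕ) :
    ∑ k ∈ Finset.Ioc 0 m, 1 / Real.sqrt k ≤ 2 * Real.sqrt m := by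
  have h := sum_le_tele (fun k => 1 / Real.sqrt k) (fun k => -(2 * Real.sqrt k)) 0 m
    (Nat.zero_le m) (fun k hk => by
      have hk1 : 1 ≤ k := (Finset.mem_Ioc.mp hk).1
      have := inv_sqrt_le k hk1
      linarith)
  simpa using h

private lemma sum_inv_pow (M N : ℕ) (hM : 1 ≤ M) (hMN : M ≤ N) :
    ∑ k ∈ Finset.Ioc M N, 1 / ((k : ℝ) * Real.sqrt k) ≤ 2 / Real.sqrt M := by
  have h := sum_le_tele (fun k => 1 / ((k : ℝ) * Real.sqrt k)) (fun k => 2 / Real.sqrt k) M N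
    hMN (fun k hk => by
      have hk2 : 2 ≤ k := by have := (Finset.mem_Ioc.mp hk).1; omega
      exact inv_pow_le k hk2)
  have hN : 0 ≤ 2 / Real.sqrt N := by positivity
  linarith

set_option maxHeartbeats 2000000 in
/-- If `δ = δ(n) → 0` and `L₀ = (log δ⁻¹)/(2δ)`, then
`Σ_{k=1}^{⌊L₀⌋} ((1+δ)^k − 1)/(√(2π) k^{3/2}) → 0` as `n → ∞`. -/
theorem light_not_supercritical_sum_tendsto_zero
    (δ : ℕ → ℝ) (hδpos : ∀ n, 0 < δ n) (hδ : Tendsto δ atTop (nhds 0)) :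
    Tendsto (fun n =>
        ∑ k ∈ Finset.Icc 1 ⌊Real.log (δ n)⁻¹ / (2 * δ n)⌋₊,
          (1 / (Real.sqrt (2 * π) * (k : ℝ) ^ (3 / 2 : ℝ))) * ((1 + δ n) ^ k - 1))
      atTop (nhds 0) := by
  rw [NormedAddCommGroup.tendsto_nhds_zero]
  intro ε hε
  set A : ℝ := 1 + 16 / ε ^ 2 with hAdef
  have hA1 : (1 : ℝ) ≤ A := by
    have h : 0 < 16 / ε ^ 2 := by positivity
    rw [hAdef]; linarith
  have hA0 : (0 : ℝ) < A := by linarith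
  set B : ℝ := 2 * Real.exp A * Real.sqrt A with hBdef
  have hB : 0 < B := by
    have := Real.exp_pos A
    have := Real.sqrt_pos.mpr hA0
    positivity
  have hthresh : (0:ℝ) < min ((ε / (2 * B)) ^ 2) (1 / 2) := by positivity
  filter_upwards [hδ.eventually_lt_const hthresh] with n hn
  obtain ⟨hn1, hn2⟩ := lt_min_iff.mp hn
  set d := δ n with hddef
  have hd : 0 < d := hδpos n
  have hd1 : d < 1 := by linarith
  have hsqd : 0 < Real.sqrt d := Real.sqrt_pos.mpr hd
  set L := ⌊Real.log d⁻¹ / (2 * d)⌋₊ with hLdef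
  set M := ⌊A / d⌋₊ with hMdef
  set m := min M L with hmdef
  have hAd : (0:ℝ) ≤ A / d := by positivity
  have hM1 : 1 ≤ M := by
    apply Nat.le_floor
    rw [Nat.cast_one, le_div_iff₀ hd]
    nlinarith
  have hdM : d * M ≤ A := by
    have := Nat.floor_le hAd
    calc d * M ≤ d * (A / d) := by
          apply mul_le_mul_of_nonneg_left this hd.le
      _ = A := by field_simp
  have hdMlow : A - 1 < d * M := by
    have := Nat.lt_floor_add_one (A / d)
    have h2 : A / d < M + 1 := this
    have h3 : A < d * (M + 1) := by
      rw [div_lt_iff₀ hd] at h2; linarith [mul_comm (d) ((M:ℝ)+1)]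
    nlinarith
  have hlogd : 0 ≤ Real.log d⁻¹ := Real.log_nonneg (by
    rw [le_inv_comm₀ one_pos hd]; simpa using hd1.le)
  have hdL : d * L ≤ Real.log d⁻¹ / 2 := by
    have hfl : (L : ℝ) ≤ Real.log d⁻¹ / (2 * d) := Nat.floor_le (by positivity)
    calc d * L ≤ d * (Real.log d⁻¹ / (2 * d)) := mul_le_mul_of_nonneg_left hfl hd.le
      _ = Real.log d⁻¹ / 2 := by field_simp
  -- rewrite sum domain
  have hIcc : Finset.Icc 1 L = Finset.Ioc 0 L := by
    rw [← Finset.Icc_add_one_left_eq_Ioc]; rfl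
  -- pointwise facts
  have hsqrt2pi : (1:ℝ) ≤ Real.sqrt (2 * π) := by
    rw [show (1:ℝ) = Real.sqrt 1 from (Real.sqrt_one).symm]
    apply Real.sqrt_le_sqrt
    nlinarith [Real.pi_gt_three]
  have hrpow : ∀ k : ℕ, 1 ≤ k → ((k : ℝ) ^ (3 / 2 : ℝ)) = (k : ℝ) * Real.sqrt k := by
    intro k hk
    have hk0 : (0:ℝ) < k := by exact_mod_cast hk
    rw [show (3/2 : ℝ) = 1 + 1/2 by norm_num, Real.rpow_add hk0, Real.rpow_one,
      ← Real.sqrt_eq_rpow]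
  have hexp_pow : ∀ k : ℕ, ((1 + d) ^ k : ℝ) ≤ Real.exp (d * k) := by
    intro k
    calc (1 + d) ^ k ≤ (Real.exp d) ^ k := by
          apply pow_le_pow_left₀ (by linarith) _ k
          linarith [Real.add_one_le_exp d]
      _ = Real.exp (d * k) := by rw [← Real.exp_nat_mul]; ring_nf
  have hterm_nonneg : ∀ k : ℕ,
      0 ≤ (1 / (Real.sqrt (2 * π) * (k : ℝ) ^ (3 / 2 : ℝ))) * ((1 + d) ^ k - 1) := by
    intro k
    apply mul_nonneg (by positivity)
    have : (1:ℝ) ≤ (1 + d) ^ k := one_le_pow₀ (by linarith)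
    linarith
  -- split the sum
  have hmL : m ≤ L := min_le_right _ _
  have hsplit : ∑ k ∈ Finset.Ioc 0 L,
      (1 / (Real.sqrt (2 * π) * (k : ℝ) ^ (3 / 2 : ℝ))) * ((1 + d) ^ k - 1)
      = (∑ k ∈ Finset.Ioc 0 m, (1 / (Real.sqrt (2 * π) * (k : ℝ) ^ (3 / 2 : ℝ))) * ((1 + d) ^ k - 1))
      + ∑ k ∈ Finset.Ioc m L, (1 / (Real.sqrt (2 * π) * (k : ℝ) ^ (3 / 2 : ℝ))) * ((1 + d) ^ k - 1) :=
    (Finset.sum_Ioc_consecutive _ (Nat.zero_le m) hmL).symm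
  -- part 1
  have hpart1 : ∑ k ∈ Finset.Ioc 0 m,
      (1 / (Real.sqrt (2 * π) * (k : ℝ) ^ (3 / 2 : ℝ))) * ((1 + d) ^ k - 1)
      ≤ B * Real.sqrt d := by
    have hstep : ∀ k ∈ Finset.Ioc 0 m,
        (1 / (Real.sqrt (2 * π) * (k : ℝ) ^ (3 / 2 : ℝ))) * ((1 + d) ^ k - 1)
        ≤ (d * Real.exp A) * (1 / Real.sqrt k) := by
      intro k hk
      obtain ⟨hk1, hkm⟩ := Finset.mem_Ioc.mp hk
      have hk0 : (0:ℝ) < k := by exact_mod_cast hk1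
      have hsk : 0 < Real.sqrt k := Real.sqrt_pos.mpr hk0
      have hdk : d * k ≤ A := by
        calc d * k ≤ d * M := by
              apply mul_le_mul_of_nonneg_left _ hd.le
              exact_mod_cast le_trans hkm (min_le_left _ _)
          _ ≤ A := hdM
      have hbound : (1 + d) ^ k - 1 ≤ d * k * Real.exp A := by
        have h1 : (1 + d) ^ k ≤ Real.exp (d * k) := hexp_pow k
        have h2 : Real.exp (d * k) - 1 ≤ (d * k) * Real.exp (d * k) := by
          have h3 := Real.add_one_le_exp (-(d * k))
          have h4 : Real.exp (-(d * k)) * Real.exp (d * k) = 1 := by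
            rw [← Real.exp_add]; simp
          nlinarith [Real.exp_pos (d * k)]
        have h5 : Real.exp (d * k) ≤ Real.exp A := Real.exp_le_exp.mpr hdk
        have hdknn : 0 ≤ d * k := by positivity
        have h6 : d * k * Real.exp (d * k) ≤ d * k * Real.exp A :=
          mul_le_mul_of_nonneg_left h5 hdknn
        linarith
      rw [hrpow k hk1]
      have hfrac : (1 / (Real.sqrt (2 * π) * ((k:ℝ) * Real.sqrt k))) ≤ 1 / ((k:ℝ) * Real.sqrt k) := by
        apply div_le_div_of_nonneg_left one_pos.le (by positivity)
        nlinarith [mul_pos hk0 hsk]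
      calc (1 / (Real.sqrt (2 * π) * ((k:ℝ) * Real.sqrt k))) * ((1 + d) ^ k - 1)
          ≤ (1 / ((k:ℝ) * Real.sqrt k)) * (d * k * Real.exp A) := by
            apply mul_le_mul hfrac hbound _ (by positivity)
            have : (1:ℝ) ≤ (1 + d) ^ k := one_le_pow₀ (by linarith)
            linarith
        _ = (d * Real.exp A) * (1 / Real.sqrt k) := by
            field_simp
    calc ∑ k ∈ Finset.Ioc 0 m,
        (1 / (Real.sqrt (2 * π) * (k : ℝ) ^ (3 / 2 : ℝ))) * ((1 + d) ^ k - 1)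
        ≤ ∑ k ∈ Finset.Ioc 0 m, (d * Real.exp A) * (1 / Real.sqrt k) :=
          Finset.sum_le_sum hstep
      _ = (d * Real.exp A) * ∑ k ∈ Finset.Ioc 0 m, (1 / Real.sqrt k) := by
          rw [Finset.mul_sum]
      _ ≤ (d * Real.exp A) * (2 * Real.sqrt m) := by
          apply mul_le_mul_of_nonneg_left (sum_inv_sqrt m) (by positivity)
      _ ≤ B * Real.sqrt d := by
          have hmA : (m : ℝ) ≤ A / d := by
            calc (m:ℝ) ≤ (M:ℝ) := by exact_mod_cast min_le_left M L
              _ ≤ A / d := Nat.floor_le hAd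
          have h6 : Real.sqrt m ≤ Real.sqrt (A / d) := Real.sqrt_le_sqrt hmA
          have h7 : Real.sqrt (A / d) = Real.sqrt A / Real.sqrt d :=
            Real.sqrt_div hA0.le d
          have h8 : d * (2 * Real.sqrt (A/d)) = 2 * Real.sqrt A * Real.sqrt d := by
            rw [h7, show d * (2 * (Real.sqrt A / Real.sqrt d))
              = 2 * Real.sqrt A * (d / Real.sqrt d) by ring, Real.div_sqrt]
          calc (d * Real.exp A) * (2 * Real.sqrt m)
              ≤ (d * Real.exp A) * (2 * Real.sqrt (A/d)) := by
                apply mul_le_mul_of_nonneg_left (by linarith) (by positivity)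
            _ = Real.exp A * (d * (2 * Real.sqrt (A/d))) := by ring
            _ = Real.exp A * (2 * Real.sqrt A * Real.sqrt d) := by rw [h8]
            _ = B * Real.sqrt d := by rw [hBdef]; ring
  -- part 2
  have hpart2 : ∑ k ∈ Finset.Ioc m L,
      (1 / (Real.sqrt (2 * π) * (k : ℝ) ^ (3 / 2 : ℝ))) * ((1 + d) ^ k - 1)
      ≤ ε / 2 := by
    rcases le_or_gt L M with hLM | hML
    · have : m = L := min_eq_right hLM
      rw [this]
      simp
      positivity
    · have hmM : m = M := min_eq_left hML.le
      rw [hmM]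
      have hstep : ∀ k ∈ Finset.Ioc M L,
          (1 / (Real.sqrt (2 * π) * (k : ℝ) ^ (3 / 2 : ℝ))) * ((1 + d) ^ k - 1)
          ≤ (1 / Real.sqrt d) * (1 / ((k:ℝ) * Real.sqrt k)) := by
        intro k hk
        obtain ⟨hkM, hkL⟩ := Finset.mem_Ioc.mp hk
        have hk1 : 1 ≤ k := le_trans hM1 hkM.le
        have hk0 : (0:ℝ) < k := by exact_mod_cast hk1
        have hsk : 0 < Real.sqrt k := Real.sqrt_pos.mpr hk0
        have hbound : (1 + d) ^ k - 1 ≤ 1 / Real.sqrt d := by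
          have h1 : (1 + d) ^ k ≤ Real.exp (d * k) := hexp_pow k
          have h2 : d * k ≤ Real.log d⁻¹ / 2 := by
            calc d * k ≤ d * L := by
                  apply mul_le_mul_of_nonneg_left _ hd.le
                  exact_mod_cast hkL
              _ ≤ Real.log d⁻¹ / 2 := hdL
          have h3 : Real.exp (d * k) ≤ Real.exp (Real.log d⁻¹ / 2) := Real.exp_le_exp.mpr h2
          have h4 : Real.exp (Real.log d⁻¹ / 2) = 1 / Real.sqrt d := by
            rw [show Real.log d⁻¹ / 2 = Real.log d⁻¹ * (1/2) by ring,
              ← Real.rpow_def_of_pos (by positivity : (0:ℝ) < d⁻¹),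
              ← Real.sqrt_eq_rpow, Real.sqrt_inv, one_div]
          linarith
        rw [hrpow k hk1]
        have hfrac : (1 / (Real.sqrt (2 * π) * ((k:ℝ) * Real.sqrt k))) ≤ 1 / ((k:ℝ) * Real.sqrt k) := by
          apply div_le_div_of_nonneg_left one_pos.le (by positivity)
          nlinarith [mul_pos hk0 hsk]
        calc (1 / (Real.sqrt (2 * π) * ((k:ℝ) * Real.sqrt k))) * ((1 + d) ^ k - 1)
            ≤ (1 / ((k:ℝ) * Real.sqrt k)) * (1 / Real.sqrt d) := by
              apply mul_le_mul hfrac hbound _ (by positivity)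
              have : (1:ℝ) ≤ (1 + d) ^ k := one_le_pow₀ (by linarith)
              linarith
          _ = (1 / Real.sqrt d) * (1 / ((k:ℝ) * Real.sqrt k)) := by ring
      calc ∑ k ∈ Finset.Ioc M L,
          (1 / (Real.sqrt (2 * π) * (k : ℝ) ^ (3 / 2 : ℝ))) * ((1 + d) ^ k - 1)
          ≤ ∑ k ∈ Finset.Ioc M L, (1 / Real.sqrt d) * (1 / ((k:ℝ) * Real.sqrt k)) :=
            Finset.sum_le_sum hstep
        _ = (1 / Real.sqrt d) * ∑ k ∈ Finset.Ioc M L, (1 / ((k:ℝ) * Real.sqrt k)) := by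
            rw [Finset.mul_sum]
        _ ≤ (1 / Real.sqrt d) * (2 / Real.sqrt M) := by
            apply mul_le_mul_of_nonneg_left (sum_inv_pow M L hM1 hML.le) (by positivity)
        _ = 2 / Real.sqrt (d * M) := by
            rw [Real.sqrt_mul hd.le]
            field_simp
        _ ≤ ε / 2 := by
            have hsM : Real.sqrt (A - 1) ≤ Real.sqrt (d * M) := Real.sqrt_le_sqrt hdMlow.le
            have hA116 : A - 1 = (4 / ε) ^ 2 := by
              rw [hAdef]; field_simp; ring
            have hsA1 : Real.sqrt (A - 1) = 4 / ε := by
              rw [hA116, Real.sqrt_sq (by positivity)]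
            have h4e : (0:ℝ) < 4 / ε := by positivity
            have hsMpos : 0 < Real.sqrt (d * M) := by
              rw [hsA1] at hsM; linarith
            calc 2 / Real.sqrt (d * M) ≤ 2 / (4 / ε) := by
                  apply div_le_div_of_nonneg_left (by norm_num) h4e
                  rw [← hsA1]; exact hsM
              _ = ε / 2 := by field_simp; ring
  -- combine
  have hS : ∑ k ∈ Finset.Icc 1 L,
      (1 / (Real.sqrt (2 * π) * (k : ℝ) ^ (3 / 2 : ℝ))) * ((1 + d) ^ k - 1)
      < ε := by
    rw [hIcc, hsplit]
    have hB2 : B * Real.sqrt d < ε / 2 := by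
      have hsd : Real.sqrt d < ε / (2 * B) := by
        have := Real.sqrt_lt_sqrt hd.le hn1
        rwa [Real.sqrt_sq (by positivity)] at this
      calc B * Real.sqrt d < B * (ε / (2 * B)) := by
            apply mul_lt_mul_of_pos_left hsd hB
        _ = ε / 2 := by field_simp
    linarith
  have hSnn : 0 ≤ ∑ k ∈ Finset.Icc 1 L,
      (1 / (Real.sqrt (2 * π) * (k : ℝ) ^ (3 / 2 : ℝ))) * ((1 + d) ^ k - 1) :=
    Finset.sum_nonneg fun k _ => hterm_nonneg k
  rw [Real.norm_eq_abs, abs_of_nonneg hSnn]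
  exact hS
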